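/- Let E be a real inner product space, let A and B be finite index sets, and let u : A → E and v : B → E be families of vectors. Then Σ_{a∈A} Σ_{b∈B} ‖u(a) − v(b)‖² − ‖Σ_{a∈A} u(a) − Σ_{b∈B} v(b)‖² = (|B|·Σ_{a∈A} ‖u(a)‖² − ‖Σ_{a∈A} u(a)‖²) + (|A|·Σ_{b∈B} ‖v(b)‖² − ‖Σ_{b∈B} v(b)‖²). -/

import Mathlib

open Finset

/-- The exact expansion comparing pairwise squared distances between two families of
vectors with the squared distance between their sums:
`Σ_{a∈A} Σ_{b∈B} ‖u a - v b‖² - ‖Σ_A u - Σ_B v‖²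
  = (|B| Σ_A ‖u a‖² - ‖Σ_A u‖²) + (|A| Σ_B ‖v b‖² - ‖Σ_B v‖²)`. -/
theorem sum_sq_dist_expansion {E : Type*} [NormedAddCommGroup E]
    [InnerProductSpace ℝ E] {α β : Type*} (A : Finset α) (B : Finset β)
    (u : α → E) (v : β → E) :
    (∑ a ∈ A, ∑ b ∈ B, ‖u a - v b‖ ^ 2) - ‖(∑ a ∈ A, u a) - ∑ b ∈ B, v b‖ ^ 2 =
      ((B.card : ℝ) * ∑ a ∈ A, ‖u a‖ ^ 2 - ‖∑ a ∈ A, u a‖ ^ 2) +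
      ((A.card : ℝ) * ∑ b ∈ B, ‖v b‖ ^ 2 - ‖∑ b ∈ B, v b‖ ^ 2) := by
  have h : ∀ x y : E, ‖x - y‖ ^ 2 = ‖x‖ ^ 2 + ‖y‖ ^ 2 - 2 * inner ℝ x y :=
    fun x y => by rw [norm_sub_sq_real]; ring
  simp_rw [h, Finset.sum_sub_distrib, Finset.sum_add_distrib, Finset.sum_const,
    ← Finset.mul_sum, ← inner_sum, ← sum_inner, nsmul_eq_mul]
  rw [← Finset.mul_sum]
  ring
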